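/- For D_{k,n} with k ≥ 1 and n ≥ 6, π₃(D_{k,n}) ≤ ⌊(2n+3k)/4⌋; that is, there exist three distinct vertices x, y, z such that the maximum number of internally disjoint {x,y,z}-paths is at most ⌊(2n+3k)/4⌋. -/

import Mathlib

open SimpleGraph

/-- A Steiner `S`-path in `G`: a path whose vertex set contains `S`. -/
structure SteinerPath {V : Type*} (G : SimpleGraph V) (S : Set V) where
  first : V
  last : V
  walk : G.Walk first last
  isPath : walk.IsPath
  contains : ∀ s ∈ S, s ∈ walk.support

/-- A family of internally disjoint `S`-paths: any two intersect exactly in `S`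
and share no edges. -/
def IDFamily {V : Type*} (G : SimpleGraph V) (S : Set V) {t : ℕ}
    (P : Fin t → SteinerPath G S) : Prop :=
  ∀ i j, i ≠ j →
    ({v | v ∈ (P i).walk.support} ∩ {v | v ∈ (P j).walk.support} = S) ∧
    (∀ e ∈ (P i).walk.edges, e ∉ (P j).walk.edges)

/-- The maximum number of internally disjoint `S`-paths in `G`. -/
noncomputable def steinerPathNumber {V : Type*} (G : SimpleGraph V) (S : Set V) : ℕ :=
  sSup {t | ∃ P : Fin t → SteinerPath G S, IDFamily G S P}

/-- The `r`-path connectivity of `G`. -/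
noncomputable def pathConnectivity {V : Type*} (G : SimpleGraph V) (r : ℕ) : ℕ :=
  sInf {m | ∃ S : Finset V, S.card = r ∧ steinerPathNumber G (↑S) = m}
/-- Number of vertices of `D_{k,n}`. -/
def dcellT (n : ℕ) : ℕ → ℕ
  | 0 => n
  | k+1 => dcellT n k * (dcellT n k + 1)

/-- Vertex set of `D_{k,n}`. -/
def DCellVtx (n : ℕ) : ℕ → Type
  | 0 => Fin n
  | k+1 => Fin (dcellT n k + 1) × DCellVtx n k

/-- The uid of a vertex of `D_{k,n}`. -/
def dcellUid (n : ℕ) : (k : ℕ) → DCellVtx n k → ℕ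
  | 0, a => a.val
  | k+1, a => dcellUid n k a.2 + a.1.val * dcellT n k

/-- Adjacency in `D_{k,n}`: inside a common copy of `D_{k-1,n}` use the recursive rule;
between two copies use the DCell connection rule. -/
def dcellAdj (n : ℕ) : (k : ℕ) → DCellVtx n k → DCellVtx n k → Prop
  | 0, a, b => a ≠ b
  | k+1, a, b =>
      (a.1 = b.1 ∧ dcellAdj n k a.2 b.2) ∨
      (a.1.val < b.1.val ∧ a.1.val = dcellUid n k b.2 ∧ b.1.val = dcellUid n k a.2 + 1) ∨
      (b.1.val < a.1.val ∧ b.1.val = dcellUid n k a.2 ∧ a.1.val = dcellUid n k b.2 + 1)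

/-- The `k`-dimensional data center network with `n`-port switches. -/
def DCell (n k : ℕ) : SimpleGraph (DCellVtx n k) where
  Adj := dcellAdj n k
  symm := by
    constructor
    induction k with
    | zero => intro a b h; exact h.symm
    | succ k ih =>
      rintro a b (⟨h1, h2⟩ | ⟨h1, h2, h3⟩ | ⟨h1, h2, h3⟩)
      · exact Or.inl ⟨h1.symm, ih _ _ h2⟩
      · exact Or.inr (Or.inr ⟨h1, h2, h3⟩)
      · exact Or.inr (Or.inl ⟨h1, h2, h3⟩)
  loopless := by
    constructor
    induction k with
    | zero => intro a h; exact h rfl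
    | succ k ih =>
      rintro a (⟨h1, h2⟩ | ⟨h1, h2, h3⟩ | ⟨h1, h2, h3⟩)
      · exact ih a.2 h2
      · omega
      · omega

/-- Two vertices of `D_{k,n}` lie in a common copy of `K_n` (level-0 cell) iff all
coordinates except the last agree. -/
def dcellSameCell (n : ℕ) : (k : ℕ) → DCellVtx n k → DCellVtx n k → Prop
  | 0, _, _ => True
  | k+1, a, b => a.1 = b.1 ∧ dcellSameCell n k a.2 b.2


section WalkCount
variable {V : Type*} [DecidableEq V] {G : SimpleGraph V}

/-- number of edges of a walk incident to `w` -/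
def wcnt {u v : V} (p : G.Walk u v) (w : V) : ℕ :=
  (p.edges.filter (fun e => w ∈ e)).length

lemma wcnt_nil {u : V} (w : V) : wcnt (Walk.nil : G.Walk u u) w = 0 := rfl

lemma wcnt_cons {u c v : V} (h : G.Adj u c) (q : G.Walk c v) (w : V) :
    wcnt (Walk.cons h q) w = (if w ∈ (s(u,c) : Sym2 V) then 1 else 0) + wcnt q w := by
  by_cases hm : w ∈ (s(u,c) : Sym2 V) <;>
    simp [wcnt, Walk.edges_cons, List.filter_cons, hm, Nat.add_comm]

lemma wcnt_eq_zero {u v : V} (p : G.Walk u v) (w : V) (hw : w ∉ p.support) :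
    wcnt p w = 0 := by
  induction p with
  | nil => rfl
  | @cons a c b h q ih =>
    rw [Walk.support_cons] at hw
    simp only [List.mem_cons, not_or] at hw
    rw [wcnt_cons, if_neg, ih hw.2]
    rw [Sym2.mem_iff]
    push_neg
    exact ⟨hw.1, fun hc => hw.2 (hc ▸ q.start_mem_support)⟩

lemma wcnt_ge_one {u v : V} (p : G.Walk u v) (w : V) (hw : w ∈ p.support)
    (hwv : w ≠ v) : 1 ≤ wcnt p w := by
  induction p with
  | nil => simp at hw; exact absurd hw hwv
  | @cons a c b h q ih =>
    rw [wcnt_cons]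
    rw [Walk.support_cons, List.mem_cons] at hw
    rcases hw with rfl | hw
    · rw [if_pos (by simp)]; omega
    · have := ih hw hwv; omega

lemma wcnt_reverse {u v : V} (p : G.Walk u v) (w : V) :
    wcnt p.reverse w = wcnt p w := by
  simp [wcnt, Walk.edges_reverse, List.filter_reverse]

lemma wcnt_ge_one' {u v : V} (p : G.Walk u v) (w : V) (hw : w ∈ p.support)
    (hwu : w ≠ u) : 1 ≤ wcnt p w := by
  rw [← wcnt_reverse]
  exact wcnt_ge_one p.reverse w (by rwa [Walk.support_reverse, List.mem_reverse]) hwu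

lemma wcnt_ge_two {u v : V} (p : G.Walk u v) (w : V) (hw : w ∈ p.support)
    (hwu : w ≠ u) (hwv : w ≠ v) : 2 ≤ wcnt p w := by
  induction p with
  | nil => simp at hw; exact absurd hw hwu
  | @cons a c b h q ih =>
    rw [Walk.support_cons, List.mem_cons] at hw
    rcases hw with rfl | hw
    · exact absurd rfl hwu
    · rw [wcnt_cons]
      by_cases hc : w = c
      · subst hc
        rw [if_pos (by simp)]
        have := wcnt_ge_one q w q.start_mem_support hwv
        omega
      · have := ih hw hc hwv; omega

lemma wcnt_start_le_one {u v : V} (p : G.Walk u v) (hp : p.IsPath) :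
    wcnt p u ≤ 1 := by
  induction p with
  | nil => simp [wcnt_nil]
  | @cons a c b h q ih =>
    rw [Walk.cons_isPath_iff] at hp
    rw [wcnt_cons, wcnt_eq_zero q a hp.2]
    split <;> omega

lemma wcnt_le_two {u v : V} (p : G.Walk u v) (hp : p.IsPath) (w : V) :
    wcnt p w ≤ 2 := by
  induction p with
  | nil => simp [wcnt_nil]
  | @cons a c b h q ih =>
    rw [Walk.cons_isPath_iff] at hp
    rw [wcnt_cons]
    by_cases hc : w = c
    · subst hc
      have := wcnt_start_le_one q hp.1
      split <;> omega
    · by_cases ha : w = a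
      · subst ha
        rw [wcnt_eq_zero q w hp.2]
        split <;> omega
      · rw [if_neg (by rw [Sym2.mem_iff]; push_neg; exact ⟨ha, hc⟩)]
        have := ih hp.1
        omega

lemma wcntF_eq {u v : V} (p : G.Walk u v) (h : p.edges.Nodup) (w : V) :
    (p.edges.toFinset.filter (fun e => w ∈ e)).card = wcnt p w := by
  have he : (p.edges.toFinset.filter (fun e => w ∈ e))
      = (p.edges.filter (fun e => w ∈ e)).toFinset := by
    ext e; simp [List.mem_filter]
  rw [he, wcnt]
  exact List.toFinset_card_of_nodup (h.filter _)

end WalkCount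

lemma ends_ne {V : Type*} {G : SimpleGraph V} {x y z : V}
    (hxy : x ≠ y) (hxz : x ≠ z) (hyz : y ≠ z)
    (p : SteinerPath G {x, y, z}) : p.first ≠ p.last := by
  intro hab
  have hx : x ∈ p.walk.support := p.contains x (by simp)
  have hy : y ∈ p.walk.support := p.contains y (by simp)
  set q : G.Walk p.first p.first := p.walk.copy rfl hab.symm with hq
  have hqp : q.IsPath := by rw [hq, Walk.isPath_copy]; exact p.isPath
  have hqn : q = Walk.nil := Walk.isPath_iff_eq_nil.mp hqp
  have hsup : q.support = p.walk.support := by rw [hq, Walk.support_copy]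
  rw [hqn] at hsup
  rw [← hsup] at hx hy
  simp at hx hy
  exact hxy (hx.trans hy.symm)

theorem count_main {V : Type*} [Fintype V] [DecidableEq V] (G : SimpleGraph V)
    [DecidableRel G.Adj]
    (x y z : V) (hxy : x ≠ y) (hxz : x ≠ z) (hyz : y ≠ z)
    (D : ℕ) (hdeg : ∀ v, G.degree v ≤ D)
    (W : Finset V) (hWS : ∀ w ∈ W, w ≠ x ∧ w ≠ y ∧ w ≠ z)
    (hWadj : ∀ w ∈ W, G.Adj x w ∧ G.Adj y w ∧ G.Adj z w)
    (t : ℕ) (P : Fin t → SteinerPath G {x, y, z}) (hP : IDFamily G {x, y, z} P) :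
    4 * t + W.card ≤ 3 * D := by
  classical
  have hxmem : ∀ i, x ∈ (P i).walk.support := fun i => (P i).contains x (by simp)
  have hymem : ∀ i, y ∈ (P i).walk.support := fun i => (P i).contains y (by simp)
  have hzmem : ∀ i, z ∈ (P i).walk.support := fun i => (P i).contains z (by simp)
  have hnodup : ∀ i, (P i).walk.edges.Nodup := fun i => (P i).isPath.isTrail.edges_nodup
  -- per-path lower bound
  have lower : ∀ i, 4 ≤ wcnt (P i).walk x + wcnt (P i).walk y + wcnt (P i).walk z := by
    intro i
    set p := (P i).walk with hp
    have hab : (P i).first ≠ (P i).last := ends_ne hxy hxz hyz (P i)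
    have one : ∀ w, w ∈ p.support → 1 ≤ wcnt p w := by
      intro w hw
      by_cases h : w = (P i).last
      · exact wcnt_ge_one' p w hw (fun hu => hab (hu ▸ h ▸ rfl))
      · exact wcnt_ge_one p w hw h
    have two : 2 ≤ wcnt p x ∨ 2 ≤ wcnt p y ∨ 2 ≤ wcnt p z := by
      by_cases h1 : x ≠ (P i).first ∧ x ≠ (P i).last
      · exact Or.inl (wcnt_ge_two p x (hxmem i) h1.1 h1.2)
      by_cases h2 : y ≠ (P i).first ∧ y ≠ (P i).last
      · exact Or.inr (Or.inl (wcnt_ge_two p y (hymem i) h2.1 h2.2))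
      push_neg at h1 h2
      have h1' : x = (P i).first ∨ x = (P i).last := by
        rcases Classical.em (x = (P i).first) with h | h
        · exact Or.inl h
        · exact Or.inr (h1 h)
      have h2' : y = (P i).first ∨ y = (P i).last := by
        rcases Classical.em (y = (P i).first) with h | h
        · exact Or.inl h
        · exact Or.inr (h2 h)
      rcases h1' with h1' | h1' <;> rcases h2' with h2' | h2'
      · exact absurd (h1'.trans h2'.symm) hxy
      · exact Or.inr (Or.inr (wcnt_ge_two p z (hzmem i)
          (fun h => hxz (h1'.trans h.symm)) (fun h => hyz (h2'.trans h.symm))))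
      · exact Or.inr (Or.inr (wcnt_ge_two p z (hzmem i)
          (fun h => hyz (h2'.trans h.symm)) (fun h => hxz (h1'.trans h.symm))))
      · exact absurd (h1'.trans h2'.symm) hxy
    have o1 := one x (hxmem i)
    have o2 := one y (hymem i)
    have o3 := one z (hzmem i)
    rcases two with h | h | h <;> omega
  set B : V → Finset (Sym2 V) := fun v =>
    Finset.univ.biUnion (fun i : Fin t => ((P i).walk.edges.toFinset.filter (fun e => v ∈ e)))
    with hB
  have hBcard : ∀ v, (B v).card = ∑ i : Fin t, wcnt (P i).walk v := by
    intro v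
    rw [hB]
    rw [Finset.card_biUnion]
    · exact Finset.sum_congr rfl (fun i _ => wcntF_eq _ (hnodup i) v)
    · intro i _ j _ hij
      simp only [Function.onFun]; rw [Finset.disjoint_left]
      intro e hei hej
      rw [Finset.mem_filter, List.mem_toFinset] at hei hej
      exact (hP i j hij).2 e hei.1 hej.1
  have key1 : 4 * t ≤ (B x).card + (B y).card + (B z).card := by
    have h4 : 4 * t = ∑ _i : Fin t, 4 := by
      simp [Finset.sum_const, Finset.card_univ, Nat.mul_comm]
    rw [h4, hBcard, hBcard, hBcard, ← Finset.sum_add_distrib, ← Finset.sum_add_distrib]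
    exact Finset.sum_le_sum (fun i _ => lower i)
  have claim : ∀ w ∈ W, (s(x,w) ∉ B x) ∨ (s(y,w) ∉ B y) ∨ (s(z,w) ∉ B z) := by
    intro w hw
    by_contra hcon
    push_neg at hcon
    obtain ⟨hx', hy', hz'⟩ := hcon
    obtain ⟨i, -, hxi⟩ := Finset.mem_biUnion.mp hx'
    obtain ⟨j, -, hyj⟩ := Finset.mem_biUnion.mp hy'
    obtain ⟨l, -, hzl⟩ := Finset.mem_biUnion.mp hz'
    rw [Finset.mem_filter, List.mem_toFinset] at hxi hyj hzl
    have hwi : w ∈ (P i).walk.support := (P i).walk.snd_mem_support_of_mem_edges hxi.1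
    have hwj : w ∈ (P j).walk.support := (P j).walk.snd_mem_support_of_mem_edges hyj.1
    have hwl : w ∈ (P l).walk.support := (P l).walk.snd_mem_support_of_mem_edges hzl.1
    obtain ⟨hwx, hwy, hwz⟩ := hWS w hw
    have hwS : w ∉ ({x, y, z} : Set V) := by simp [hwx, hwy, hwz]
    have hsame : ∀ i' j', w ∈ (P i').walk.support → w ∈ (P j').walk.support → i' = j' := by
      intro i' j' ha hb
      by_contra hne
      exact hwS ((hP i' j' hne).1 ▸ (⟨ha, hb⟩ : w ∈ ({v | v ∈ (P i').walk.support} ∩ {v | v ∈ (P j').walk.support})))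
    have hji : j = i := hsame j i hwj hwi
    have hli : l = i := hsame l i hwl hwi
    rw [hji] at hyj
    rw [hli] at hzl
    have hne1 : (s(x,w) : Sym2 V) ≠ s(y,w) := by
      intro h
      rcases Sym2.eq_iff.mp h with ⟨h1, -⟩ | ⟨h1, -⟩
      · exact hxy h1
      · exact hwx h1.symm
    have hne2 : (s(x,w) : Sym2 V) ≠ s(z,w) := by
      intro h
      rcases Sym2.eq_iff.mp h with ⟨h1, -⟩ | ⟨h1, -⟩
      · exact hxz h1
      · exact hwx h1.symm
    have hne3 : (s(y,w) : Sym2 V) ≠ s(z,w) := by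
      intro h
      rcases Sym2.eq_iff.mp h with ⟨h1, -⟩ | ⟨h1, -⟩
      · exact hyz h1
      · exact hwy h1.symm
    have hcard3 : ({s(x,w), s(y,w), s(z,w)} : Finset (Sym2 V)).card = 3 :=
      Finset.card_eq_three.mpr ⟨_, _, _, hne1, hne2, hne3, rfl⟩
    have hsub : ({s(x,w), s(y,w), s(z,w)} : Finset (Sym2 V)) ⊆
        (P i).walk.edges.toFinset.filter (fun e => w ∈ e) := by
      intro e he
      rw [Finset.mem_insert, Finset.mem_insert, Finset.mem_singleton] at he
      rw [Finset.mem_filter, List.mem_toFinset]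
      rcases he with rfl | rfl | rfl
      · exact ⟨hxi.1, by simp⟩
      · exact ⟨hyj.1, by simp⟩
      · exact ⟨hzl.1, by simp⟩
    have h3 : 3 ≤ wcnt (P i).walk w := by
      calc 3 = ({s(x,w), s(y,w), s(z,w)} : Finset (Sym2 V)).card := hcard3.symm
      _ ≤ ((P i).walk.edges.toFinset.filter (fun e => w ∈ e)).card := Finset.card_le_card hsub
      _ = wcnt (P i).walk w := wcntF_eq _ (hnodup i) w
    have h2 := wcnt_le_two (P i).walk (P i).isPath w
    omega
  have claim' : ∀ w ∈ W, ∃ v, (v = x ∨ v = y ∨ v = z) ∧ s(v, w) ∉ B v := by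
    intro w hw
    rcases claim w hw with h | h | h
    exacts [⟨x, Or.inl rfl, h⟩, ⟨y, Or.inr (Or.inl rfl), h⟩, ⟨z, Or.inr (Or.inr rfl), h⟩]
  choose! φ hφ1 hφ2 using claim'
  have hfib : W.card = ∑ v ∈ ({x, y, z} : Finset V), (W.filter (fun w => φ w = v)).card :=
    Finset.card_eq_sum_card_fiberwise (fun w hw => by
      rcases hφ1 w hw with h | h | h <;> simp [h])
  have pervertex : ∀ v, (v = x ∨ v = y ∨ v = z) →
      (B v).card + (W.filter (fun w => φ w = v)).card ≤ D := by
    intro v hv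
    set F := (W.filter (fun w => φ w = v)) with hF
    have hinj : Set.InjOn (fun w => (s(v, w) : Sym2 V)) F := by
      intro w hw w' hw' h
      simp only [Sym2.eq_iff] at h
      rcases h with ⟨-, h2⟩ | ⟨h1, h2⟩
      · exact h2
      · rw [hF, Finset.coe_filter, Set.mem_setOf_eq] at hw'
        obtain ⟨hw'1, hw'2, hw'3⟩ := hWS w' hw'.1
        rcases hv with rfl | rfl | rfl
        exacts [absurd h1.symm hw'1, absurd h1.symm hw'2, absurd h1.symm hw'3]
    have himgcard : (F.image (fun w => (s(v, w) : Sym2 V))).card = F.card :=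
      Finset.card_image_of_injOn hinj
    have hdisj : Disjoint (B v) (F.image (fun w => (s(v, w) : Sym2 V))) := by
      rw [Finset.disjoint_right]
      intro e he
      obtain ⟨w, hw, rfl⟩ := Finset.mem_image.mp he
      rw [hF, Finset.mem_filter] at hw
      have := hφ2 w hw.1
      rw [hw.2] at this
      exact this
    have hsub : B v ∪ F.image (fun w => (s(v, w) : Sym2 V)) ⊆ G.incidenceFinset v := by
      intro e he
      rw [Finset.mem_union] at he
      rw [mem_incidenceFinset]
      rcases he with he | he
      · obtain ⟨i, -, hei⟩ := Finset.mem_biUnion.mp he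
        rw [Finset.mem_filter, List.mem_toFinset] at hei
        exact ⟨(P i).walk.edges_subset_edgeSet hei.1, hei.2⟩
      · obtain ⟨w, hw, rfl⟩ := Finset.mem_image.mp he
        rw [hF, Finset.mem_filter] at hw
        obtain ⟨ha1, ha2, ha3⟩ := hWadj w hw.1
        have hadj : G.Adj v w := by rcases hv with rfl | rfl | rfl <;> assumption
        exact ⟨(G.mem_edgeSet).mpr hadj, Sym2.mem_mk_left v w⟩
    calc (B v).card + F.card
        = (B v ∪ F.image (fun w => (s(v, w) : Sym2 V))).card := by
          rw [Finset.card_union_of_disjoint hdisj, himgcard]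
      _ ≤ (G.incidenceFinset v).card := Finset.card_le_card hsub
      _ = G.degree v := G.card_incidenceFinset_eq_degree v
      _ ≤ D := hdeg v
  have hx' := pervertex x (Or.inl rfl)
  have hy' := pervertex y (Or.inr (Or.inl rfl))
  have hz' := pervertex z (Or.inr (Or.inr rfl))
  have hfib' : W.card = (W.filter (fun w => φ w = x)).card
      + ((W.filter (fun w => φ w = y)).card + (W.filter (fun w => φ w = z)).card) := by
    rw [hfib, Finset.sum_insert (by simp [hxy, hxz]), Finset.sum_pair hyz]
  omega

-- ### instances
def dcellFintype (n : ℕ) : (k : ℕ) → Fintype (DCellVtx n k)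
  | 0 => inferInstanceAs (Fintype (Fin n))
  | k+1 =>
    letI := dcellFintype n k
    inferInstanceAs (Fintype (Fin (dcellT n k + 1) × DCellVtx n k))

instance (n k : ℕ) : Fintype (DCellVtx n k) := dcellFintype n k

def dcellDecEq (n : ℕ) : (k : ℕ) → DecidableEq (DCellVtx n k)
  | 0 => inferInstanceAs (DecidableEq (Fin n))
  | k+1 =>
    letI := dcellDecEq n k
    inferInstanceAs (DecidableEq (Fin (dcellT n k + 1) × DCellVtx n k))

instance (n k : ℕ) : DecidableEq (DCellVtx n k) := dcellDecEq n k

noncomputable instance (n k : ℕ) : DecidableRel (DCell n k).Adj := Classical.decRel _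

-- ### uid facts
lemma dcellUid_lt (n : ℕ) : ∀ k (v : DCellVtx n k), dcellUid n k v < dcellT n k := by
  intro k
  induction k with
  | zero => intro v; exact v.isLt
  | succ k ih =>
    intro v
    have h1 := ih v.2
    have h2 : v.1.val ≤ dcellT n k := Nat.lt_succ_iff.mp v.1.isLt
    have h3 : v.1.val * dcellT n k ≤ dcellT n k * dcellT n k :=
      Nat.mul_le_mul_right _ h2
    show dcellUid n k v.2 + v.1.val * dcellT n k < dcellT n k * (dcellT n k + 1)
    have : dcellT n k * (dcellT n k + 1) = dcellT n k * dcellT n k + dcellT n k := by ring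
    omega

lemma dcellUid_inj (n : ℕ) : ∀ k, Function.Injective (dcellUid n k) := by
  intro k
  induction k with
  | zero => intro a b h; exact Fin.ext h
  | succ k ih =>
    intro a b h
    have ha := dcellUid_lt n k a.2
    have hb := dcellUid_lt n k b.2
    have h' : dcellUid n k a.2 + a.1.val * dcellT n k
        = dcellUid n k b.2 + b.1.val * dcellT n k := h
    have hval : a.1.val = b.1.val := by
      by_contra hne
      rcases Nat.lt_or_ge a.1.val b.1.val with hlt | hge
      · have : (a.1.val + 1) * dcellT n k ≤ b.1.val * dcellT n k :=
          Nat.mul_le_mul_right _ hlt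
        have h'' : a.1.val * dcellT n k + dcellT n k ≤ b.1.val * dcellT n k := by
          rw [← Nat.succ_mul]; exact this
        omega
      · rcases Nat.lt_or_ge b.1.val a.1.val with hlt' | hge'
        · have : (b.1.val + 1) * dcellT n k ≤ a.1.val * dcellT n k :=
            Nat.mul_le_mul_right _ hlt'
          have h'' : b.1.val * dcellT n k + dcellT n k ≤ a.1.val * dcellT n k := by
            rw [← Nat.succ_mul]; exact this
          omega
        · omega
    have h2 : dcellUid n k a.2 = dcellUid n k b.2 := by
      rw [hval] at h'
      omega
    exact Prod.ext (Fin.ext hval) (ih h2)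

-- cross relation
def dcellCross (n k : ℕ) (a b : DCellVtx n (k+1)) : Prop :=
  (a.1.val < b.1.val ∧ a.1.val = dcellUid n k b.2 ∧ b.1.val = dcellUid n k a.2 + 1) ∨
  (b.1.val < a.1.val ∧ b.1.val = dcellUid n k a.2 ∧ a.1.val = dcellUid n k b.2 + 1)

lemma dcellCross_unique (n k : ℕ) (a b b' : DCellVtx n (k+1))
    (hb : dcellCross n k a b) (hb' : dcellCross n k a b') : b = b' := by
  rcases hb with ⟨h1, h2, h3⟩ | ⟨h1, h2, h3⟩ <;>
  rcases hb' with ⟨g1, g2, g3⟩ | ⟨g1, g2, g3⟩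
  · exact Prod.ext (Fin.ext (h3.symm ▸ g3.symm ▸ rfl))
      (dcellUid_inj n k (h2.symm.trans g2))
  · omega
  · omega
  · exact Prod.ext (Fin.ext (h2.symm ▸ g2.symm ▸ rfl))
      (dcellUid_inj n k (by omega))

lemma dcell_card (n : ℕ) : Fintype.card (DCellVtx n 0) = n :=
  (Fintype.card_congr (Equiv.cast (show DCellVtx n 0 = Fin n from rfl))).trans
    (Fintype.card_fin n)

lemma dcell_degree_le (n : ℕ) (hn : 1 ≤ n) :
    ∀ k (v : DCellVtx n k), (DCell n k).degree v ≤ n + k - 1 := by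
  intro k
  induction k with
  | zero =>
    intro v
    have hsub : (DCell n 0).neighborFinset v ⊆ Finset.univ.erase v := by
      intro b hb
      rw [mem_neighborFinset] at hb
      have : v ≠ b := hb
      exact Finset.mem_erase.mpr ⟨this.symm, Finset.mem_univ b⟩
    calc (DCell n 0).degree v ≤ (Finset.univ.erase v).card := Finset.card_le_card hsub
      _ = Fintype.card (DCellVtx n 0) - 1 := by
          rw [Finset.card_erase_of_mem (Finset.mem_univ v), Finset.card_univ]
      _ = n + 0 - 1 := by rw [dcell_card]; omega
  | succ k ih =>
    intro v
    have hmain : ∀ b ∈ (DCell n (k+1)).neighborFinset v,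
        (b.1 = v.1 ∧ b.2 ∈ (DCell n k).neighborFinset v.2) ∨ dcellCross n k v b := by
      intro b hb
      rw [mem_neighborFinset] at hb
      rcases hb with ⟨h1, h2⟩ | h | h
      · exact Or.inl ⟨h1.symm, (mem_neighborFinset _ _ _).mpr h2⟩
      · exact Or.inr (Or.inl h)
      · exact Or.inr (Or.inr h)
    by_cases hc : ∃ b, dcellCross n k v b
    · obtain ⟨b₀, hb₀⟩ := hc
      have hsub : (DCell n (k+1)).neighborFinset v ⊆
          insert b₀ (((DCell n k).neighborFinset v.2).image (fun u => (v.1, u))) := by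
        intro b hb
        rcases hmain b hb with ⟨h1, h2⟩ | h
        · exact Finset.mem_insert_of_mem (Finset.mem_image.mpr ⟨b.2, h2, by
            exact Prod.ext h1.symm rfl⟩)
        · exact (dcellCross_unique n k v b b₀ h hb₀) ▸ Finset.mem_insert_self _ _
      calc (DCell n (k+1)).degree v
          ≤ (insert b₀ (((DCell n k).neighborFinset v.2).image (fun u => (v.1, u)))).card :=
            Finset.card_le_card hsub
        _ ≤ (((DCell n k).neighborFinset v.2).image (fun u => (v.1, u))).card + 1 :=
            Finset.card_insert_le _ _
        _ ≤ (DCell n k).degree v.2 + 1 := by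
            have := Finset.card_image_le (s := (DCell n k).neighborFinset v.2)
              (f := fun u => (v.1, u))
            exact Nat.add_le_add_right this 1
        _ ≤ (n + k - 1) + 1 := Nat.add_le_add_right (ih v.2) 1
        _ ≤ n + (k+1) - 1 := by omega
    · push_neg at hc
      have hsub : (DCell n (k+1)).neighborFinset v ⊆
          ((DCell n k).neighborFinset v.2).image (fun u => (v.1, u)) := by
        intro b hb
        rcases hmain b hb with ⟨h1, h2⟩ | h
        · exact Finset.mem_image.mpr ⟨b.2, h2, by exact Prod.ext h1.symm rfl⟩
        · exact absurd h (hc b)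
      calc (DCell n (k+1)).degree v
          ≤ (((DCell n k).neighborFinset v.2).image (fun u => (v.1, u))).card :=
            Finset.card_le_card hsub
        _ ≤ (DCell n k).degree v.2 := Finset.card_image_le
        _ ≤ n + k - 1 := ih v.2
        _ ≤ n + (k+1) - 1 := by omega

-- ### the embedded K_n cell
def dcellEmb (n : ℕ) : (k : ℕ) → Fin n → DCellVtx n k
  | 0, a => a
  | k+1, a => (0, dcellEmb n k a)

lemma dcellEmb_inj (n : ℕ) : ∀ k, Function.Injective (dcellEmb n k) := by
  intro k
  induction k with
  | zero => intro a b h; exact h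
  | succ k ih => intro a b h; exact ih (congrArg Prod.snd h)

lemma dcellEmb_adj (n : ℕ) : ∀ k (a b : Fin n), a ≠ b →
    (DCell n k).Adj (dcellEmb n k a) (dcellEmb n k b) := by
  intro k
  induction k with
  | zero => intro a b h; exact h
  | succ k ih => intro a b h; exact Or.inl ⟨rfl, ih a b h⟩

/-- Upper bound: `π₃(D_{k,n}) ≤ ⌊(2n+3k)/4⌋` for `k ≥ 1`, `n ≥ 6`; witnessed by three
distinct vertices admitting at most that many internally disjoint Steiner paths. -/
theorem stmt9 (n k : ℕ) (hk : 1 ≤ k) (hn : 6 ≤ n) :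
    pathConnectivity (DCell n k) 3 ≤ (2 * n + 3 * k) / 4 ∧
    ∃ x y z : DCellVtx n k, x ≠ y ∧ x ≠ z ∧ y ≠ z ∧
      steinerPathNumber (DCell n k) {x, y, z} ≤ (2 * n + 3 * k) / 4 := by
  classical
  have hn1 : 1 ≤ n := by omega
  set G := DCell n k with hG
  set x := dcellEmb n k ⟨0, by omega⟩ with hx
  set y := dcellEmb n k ⟨1, by omega⟩ with hy
  set z := dcellEmb n k ⟨2, by omega⟩ with hz
  have hinj := dcellEmb_inj n k
  have hxy : x ≠ y := fun h => by
    have h2 := congrArg Fin.val (hinj h); simp at h2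
  have hxz : x ≠ z := fun h => by
    have h2 := congrArg Fin.val (hinj h); simp at h2
  have hyz : y ≠ z := fun h => by
    have h2 := congrArg Fin.val (hinj h); simp at h2
  set W : Finset (DCellVtx n k) :=
    (Finset.univ : Finset (Fin (n-3))).image
      (fun j => dcellEmb n k ⟨j.val + 3, by omega⟩) with hW
  have hWcard : W.card = n - 3 := by
    rw [hW, Finset.card_image_of_injOn, Finset.card_univ, Fintype.card_fin]
    intro j _ j' _ h
    have h2 := congrArg Fin.val (hinj h)
    simp at h2
    exact Fin.ext h2
  have hWS : ∀ w ∈ W, w ≠ x ∧ w ≠ y ∧ w ≠ z := by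
    intro w hw
    obtain ⟨j, -, rfl⟩ := Finset.mem_image.mp hw
    refine ⟨fun h => ?_, fun h => ?_, fun h => ?_⟩ <;>
      (have h2 := congrArg Fin.val (hinj h); simp at h2)
  have hWadj : ∀ w ∈ W, G.Adj x w ∧ G.Adj y w ∧ G.Adj z w := by
    intro w hw
    obtain ⟨j, -, rfl⟩ := Finset.mem_image.mp hw
    refine ⟨dcellEmb_adj n k _ _ fun h => ?_, dcellEmb_adj n k _ _ fun h => ?_,
      dcellEmb_adj n k _ _ fun h => ?_⟩ <;>
      (have h2 := congrArg Fin.val h; simp at h2)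
  have hbound : ∀ t ∈ {t | ∃ P : Fin t → SteinerPath G {x, y, z}, IDFamily G {x, y, z} P},
      t ≤ (2 * n + 3 * k) / 4 := by
    intro t ht
    obtain ⟨P, hP⟩ := ht
    have hcm := count_main G x y z hxy hxz hyz (n + k - 1)
      (dcell_degree_le n hn1 k) W hWS hWadj t P hP
    rw [hWcard] at hcm
    omega
  have hspn : steinerPathNumber G {x, y, z} ≤ (2 * n + 3 * k) / 4 := by
    apply csSup_le
    · exact ⟨0, fun i => i.elim0, fun i => i.elim0⟩
    · exact hbound
  refine ⟨?_, x, y, z, hxy, hxz, hyz, hspn⟩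
  have hmem : steinerPathNumber G ({x, y, z} : Set _) ∈
      {m | ∃ S : Finset (DCellVtx n k), S.card = 3 ∧ steinerPathNumber G (↑S) = m} := by
    refine ⟨{x, y, z}, ?_, ?_⟩
    · exact Finset.card_eq_three.mpr ⟨x, y, z, hxy, hxz, hyz, rfl⟩
    · congr 1
      simp
  exact le_trans (Nat.sInf_le hmem) hspn
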